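/- (Robust optimality for the one-sided problem.) Let A, B₁, B₂ be real symmetric n×n matrices, a, b₁, b₂ ∈ ℝ^n, and β, μ₁, μ₂, δ₁, δ₂ ∈ ℝ with μ₁ < μ₂ and δ₁ < δ₂. Consider the robust problem: minimize f(x) = ½xᵀAx + aᵀx subject to ½xᵀ(B₁+μB₂)x + (b₁+δb₂)ᵀx ≤ β for all μ ∈ [μ₁,μ₂] and all δ ∈ [δ₁,δ₂]. Let x̄ be feasible and set γ = −f(x̄). Assume that Ω_W^β (defined with this γ) is convex and that there exists x₀ ∈ ℝ^n with ½x₀ᵀ(B₁+μB₂)x₀ + (b₁+δb₂)ᵀx₀ < β for all μ ∈ [μ₁,μ₂] and δ ∈ [δ₁,δ₂]. Then x̄ is a global solution of the robust problem if and only if there exist λ ≥ 0, μ ∈ [μ₁,μ₂] and δ ∈ [δ₁,δ₂] such that: (a) (A + λ(B₁+μB₂))x̄ = −(a + λ(b₁+δb₂)); (b) λ(½x̄ᵀ(B₁+μB₂)x̄ + (b₁+δb₂)ᵀx̄ − β) = 0; (c) A + λ(B₁+μB₂) is positive semidefinite. -/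

import Mathlib

open Matrix Set Pointwise

/-- The set `Ω_W^β ⊆ ℝ³`: the Minkowski sum of the image of `y = (x,t) ∈ ℝ^{n+1}` under the
three quadratic forms `½yᵀH₀y`, `max_{μ∈[μ₁,μ₂]} ½yᵀ(W_{1β}+μW₂)y`,
`max_{μ∈[μ₁,μ₂]} ½yᵀ(W_{2β}+μW₂)y` with the open positive orthant of `ℝ³`. -/
noncomputable def OmegaWbeta (n : ℕ) (A B₁ B₂ : Matrix (Fin n) (Fin n) ℝ)
    (a b₁ b₂ : Fin n → ℝ) (γ β μ₁ μ₂ δ₁ δ₂ : ℝ) : Set (Fin 3 → ℝ) :=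
  (Set.range (fun y : (Fin n → ℝ) × ℝ =>
    ![(1 / 2) * (y.1 ⬝ᵥ (A *ᵥ y.1)) + y.2 * (a ⬝ᵥ y.1) + γ * y.2 ^ 2,
      sSup ((fun μ => (1 / 2) * (y.1 ⬝ᵥ ((B₁ + μ • B₂) *ᵥ y.1))
        + y.2 * ((b₁ + δ₁ • b₂) ⬝ᵥ y.1) - β * y.2 ^ 2) '' Icc μ₁ μ₂),
      sSup ((fun μ => (1 / 2) * (y.1 ⬝ᵥ ((B₁ + μ • B₂) *ᵥ y.1))
        + y.2 * ((b₁ + δ₂ • b₂) ⬝ᵥ y.1) - β * y.2 ^ 2) '' Icc μ₁ μ₂)]))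
  + {z : Fin 3 → ℝ | ∀ i, 0 < z i}

lemma deriv_zero_of_quad_nonneg (G H : ℝ) (h : ∀ s : ℝ, 0 ≤ s * G + s ^ 2 * H) : G = 0 := by
  by_contra hG
  rcases le_or_gt H 0 with hH | hH
  · have h1 := h (-G)
    nlinarith [mul_self_pos.mpr hG, sq_nonneg G]
  · have h1 := h (-(G / (2 * H)))
    have h2 : (0:ℝ) < H := hH
    have hGsq : 0 < G ^ 2 := by positivity
    have : -(G / (2 * H)) * G + (-(G / (2 * H))) ^ 2 * H = -(G ^ 2 / (4 * H)) := by
      field_simp; ring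
    rw [this] at h1
    have h3 : 0 < G ^ 2 / (4 * H) := div_pos hGsq (by linarith)
    linarith

lemma sSup_affine_Icc (c d μ₁ μ₂ : ℝ) (h : μ₁ ≤ μ₂) :
    sSup ((fun μ => c + μ * d) '' Icc μ₁ μ₂) = max (c + μ₁ * d) (c + μ₂ * d) := by
  apply IsGreatest.csSup_eq
  constructor
  · rcases le_total 0 d with hd | hd
    · have hmax : max (c + μ₁ * d) (c + μ₂ * d) = c + μ₂ * d :=
        max_eq_right (by nlinarith)
      rw [hmax]
      exact ⟨μ₂, ⟨h, le_refl _⟩, rfl⟩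
    · have hmax : max (c + μ₁ * d) (c + μ₂ * d) = c + μ₁ * d :=
        max_eq_left (by nlinarith)
      rw [hmax]
      exact ⟨μ₁, ⟨le_refl _, h⟩, rfl⟩
  · rintro z ⟨μ, ⟨h1, h2⟩, rfl⟩
    simp only
    rcases le_total 0 d with hd | hd
    · exact le_max_of_le_right (by nlinarith)
    · exact le_max_of_le_left (by nlinarith)

lemma dot_mulVec_symm {n : ℕ} {M : Matrix (Fin n) (Fin n) ℝ} (hM : M.IsSymm)
    (u v : Fin n → ℝ) : u ⬝ᵥ (M *ᵥ v) = v ⬝ᵥ (M *ᵥ u) := by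
  rw [Matrix.dotProduct_mulVec, ← Matrix.mulVec_transpose, hM, dotProduct_comm]

section Yuan

variable {V : Type*} [AddCommGroup V] [Module ℝ V]

/-- Bilinearity + symmetry packaged. -/
def IsSymBilin (Φ : V → V → ℝ) : Prop :=
  (∀ u v w : V, Φ (u + v) w = Φ u w + Φ v w) ∧
  (∀ (c : ℝ) (u v : V), Φ (c • u) v = c * Φ u v) ∧
  (∀ u v : V, Φ u v = Φ v u)

lemma IsSymBilin.expand {Φ : V → V → ℝ} (hΦ : IsSymBilin Φ) (c s : ℝ) (u v : V) :
    Φ (c • u + s • v) (c • u + s • v)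
      = c ^ 2 * Φ u u + 2 * c * s * Φ u v + s ^ 2 * Φ v v := by
  obtain ⟨hadd, hsmul, hsymm⟩ := hΦ
  have haddr : ∀ a b c : V, Φ a (b + c) = Φ a b + Φ a c := fun a b c => by
    rw [hsymm, hadd, hsymm b, hsymm c]
  have hsmulr : ∀ (r : ℝ) (a b : V), Φ a (r • b) = r * Φ a b := fun r a b => by
    rw [hsymm, hsmul, hsymm]
  simp only [hadd, haddr, hsmul, hsmulr]
  rw [hsymm v u]
  ring

lemma IsSymBilin.zero {Φ : V → V → ℝ} (hΦ : IsSymBilin Φ) : Φ 0 0 = 0 := by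
  have := hΦ.2.1 0 0 0
  simpa using this

lemma IsSymBilin.sq_smul {Φ : V → V → ℝ} (hΦ : IsSymBilin Φ) (r : ℝ) (u : V) :
    Φ (r • u) (r • u) = r ^ 2 * Φ u u := by
  have := hΦ.expand r 0 u 0
  simpa [hΦ.zero] using this

/-- Dines' key step: the joint range of two quadratic forms is closed under addition. -/
lemma dines_add {Φ₁ Φ₂ : V → V → ℝ} (h₁ : IsSymBilin Φ₁) (h₂ : IsSymBilin Φ₂) (u v : V) :
    ∃ y : V, Φ₁ y y = Φ₁ u u + Φ₁ v v ∧ Φ₂ y y = Φ₂ u u + Φ₂ v v := by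
  set p₁ := Φ₁ u u with hp₁; set p₂ := Φ₂ u u with hp₂
  set q₁ := Φ₁ v v with hq₁; set q₂ := Φ₂ v v with hq₂
  set e₁ := Φ₁ u v with he₁; set e₂ := Φ₂ u v with he₂
  set m₁ := (p₁ + q₁) / 2 with hm₁d; set m₂ := (p₂ + q₂) / 2 with hm₂d
  set d₁ := (p₁ - q₁) / 2 with hd₁d; set d₂ := (p₂ - q₂) / 2 with hd₂d
  by_cases hm : m₁ = 0 ∧ m₂ = 0
  · refine ⟨0, ?_, ?_⟩
    · rw [h₁.zero]; have := hm.1; rw [hm₁d] at this; linarith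
    · rw [h₂.zero]; have := hm.2; rw [hm₂d] at this; linarith
  · -- m ≠ 0
    have hmsq : 0 < m₁ ^ 2 + m₂ ^ 2 := by
      rcases (not_and_or.mp hm) with h | h
      · have : 0 < m₁ ^ 2 := by positivity
        nlinarith [sq_nonneg m₂]
      · have : 0 < m₂ ^ 2 := by positivity
        nlinarith [sq_nonneg m₁]
    set a := d₁ * (-m₂) + d₂ * m₁ with ha
    set b := e₁ * (-m₂) + e₂ * m₁ with hb
    -- choose unit vector (α, β) with α*a + β*b = 0
    obtain ⟨α, β, hunit, hperp⟩ : ∃ α β : ℝ, α ^ 2 + β ^ 2 = 1 ∧ α * a + β * b = 0 := by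
      by_cases hab : a = 0 ∧ b = 0
      · exact ⟨1, 0, by norm_num, by rw [hab.1, hab.2]; ring⟩
      · have habs : 0 < a ^ 2 + b ^ 2 := by
          rcases (not_and_or.mp hab) with h | h
          · have : 0 < a ^ 2 := by positivity
            nlinarith [sq_nonneg b]
          · have : 0 < b ^ 2 := by positivity
            nlinarith [sq_nonneg a]
        have hr : 0 < Real.sqrt (a ^ 2 + b ^ 2) := Real.sqrt_pos.mpr habs
        refine ⟨b / Real.sqrt (a ^ 2 + b ^ 2), -a / Real.sqrt (a ^ 2 + b ^ 2), ?_, by field_simp; ring⟩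
        have hsq : (Real.sqrt (a ^ 2 + b ^ 2)) ^ 2 = a ^ 2 + b ^ 2 :=
          Real.sq_sqrt (le_of_lt habs)
        field_simp [hsq]
        have hsq' : √(b ^ 2 + a ^ 2) ^ 2 = b ^ 2 + a ^ 2 := Real.sq_sqrt (by positivity)
        linarith [hsq, hsq']
    -- w := α d + β e is a multiple of m
    set κ := ((α * d₁ + β * e₁) * m₁ + (α * d₂ + β * e₂) * m₂) / (m₁ ^ 2 + m₂ ^ 2) with hκ
    have hw₁ : α * d₁ + β * e₁ = κ * m₁ := by
      have hperp' : -(α * d₁ + β * e₁) * m₂ + (α * d₂ + β * e₂) * m₁ = 0 := by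
        rw [ha, hb] at hperp; linear_combination hperp
      rw [hκ]
      field_simp
      linear_combination (-m₂) * hperp'
    have hw₂ : α * d₂ + β * e₂ = κ * m₂ := by
      have hperp' : -(α * d₁ + β * e₁) * m₂ + (α * d₂ + β * e₂) * m₁ = 0 := by
        rw [ha, hb] at hperp; linear_combination hperp
      rw [hκ]
      field_simp
      linear_combination m₁ * hperp'
    -- flip sign so that κ' ≥ 0
    obtain ⟨α', β', κ', hunit', hκ'0, hw₁', hw₂'⟩ :
        ∃ α' β' κ' : ℝ, α' ^ 2 + β' ^ 2 = 1 ∧ 0 ≤ κ' ∧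
          α' * d₁ + β' * e₁ = κ' * m₁ ∧ α' * d₂ + β' * e₂ = κ' * m₂ := by
      rcases lt_or_ge κ 0 with hlt | hle
      · exact ⟨-α, -β, -κ, by linear_combination hunit, by linarith,
          by linear_combination -hw₁, by linear_combination -hw₂⟩
      · exact ⟨α, β, κ, hunit, hle, hw₁, hw₂⟩
    clear hw₁ hw₂ hperp hκ
    -- construct c, s
    set ρ := 2 / (1 + κ') with hρ
    have hρpos : 0 < ρ := by rw [hρ]; positivity
    have hα'le : α' ^ 2 ≤ 1 := by linarith [sq_nonneg β']
    have h1α : 0 ≤ 1 + α' := by linarith [sq_nonneg (1 + α')]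
    have h1α' : 0 ≤ 1 - α' := by linarith [sq_nonneg (1 - α')]
    obtain ⟨c, s, hc2, hs2, hcs⟩ : ∃ c s : ℝ,
        c ^ 2 = ρ * (1 + α') / 2 ∧ s ^ 2 = ρ * (1 - α') / 2 ∧ 2 * c * s = ρ * β' := by
      refine ⟨Real.sqrt (ρ * (1 + α') / 2),
        (if β' < 0 then (-1 : ℝ) else 1) * Real.sqrt (ρ * (1 - α') / 2),
        Real.sq_sqrt (by positivity), ?_, ?_⟩
      · rw [mul_pow, Real.sq_sqrt (by positivity)]
        split <;> norm_num
      · have hsqrt : Real.sqrt (ρ * (1 + α') / 2) * Real.sqrt (ρ * (1 - α') / 2)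
            = ρ / 2 * |β'| := by
          rw [← Real.sqrt_mul (by positivity)]
          have hh : ρ * (1 + α') / 2 * (ρ * (1 - α') / 2) = (ρ / 2) ^ 2 * β' ^ 2 := by
            have hb2 : β' ^ 2 = 1 - α' ^ 2 := by linarith
            rw [hb2]; ring
          rw [hh, Real.sqrt_mul (by positivity), Real.sqrt_sq (by positivity),
            Real.sqrt_sq_eq_abs]
        rcases lt_or_ge β' 0 with hb' | hb'
        · rw [if_pos hb']
          rw [abs_of_neg hb'] at hsqrt
          linear_combination (-2 : ℝ) * hsqrt
        · rw [if_neg (not_lt.mpr hb')]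
          rw [abs_of_nonneg hb'] at hsqrt
          linear_combination (2 : ℝ) * hsqrt
    refine ⟨c • u + s • v, ?_, ?_⟩
    · rw [h₁.expand, ← hp₁, ← hq₁, ← he₁, hc2, hs2]
      have h2cs : 2 * c * s * e₁ = ρ * β' * e₁ := by rw [hcs]
      have hfin : ρ * (1 + α') / 2 * p₁ + ρ * β' * e₁ + ρ * (1 - α') / 2 * q₁
          = ρ * (m₁ + (α' * d₁ + β' * e₁)) := by rw [hm₁d, hd₁d]; ring
      have hρκ : ρ * (1 + κ') = 2 := by
        rw [hρ]; field_simp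
      calc ρ * (1 + α') / 2 * p₁ + 2 * c * s * e₁ + ρ * (1 - α') / 2 * q₁
          = ρ * (m₁ + (α' * d₁ + β' * e₁)) := by rw [h2cs]; exact hfin
        _ = ρ * (1 + κ') * m₁ := by rw [hw₁']; ring
        _ = p₁ + q₁ := by rw [hρκ, hm₁d]; ring
    · rw [h₂.expand, ← hp₂, ← hq₂, ← he₂, hc2, hs2]
      have h2cs : 2 * c * s * e₂ = ρ * β' * e₂ := by rw [hcs]
      have hfin : ρ * (1 + α') / 2 * p₂ + ρ * β' * e₂ + ρ * (1 - α') / 2 * q₂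
          = ρ * (m₂ + (α' * d₂ + β' * e₂)) := by rw [hm₂d, hd₂d]; ring
      have hρκ : ρ * (1 + κ') = 2 := by
        rw [hρ]; field_simp
      calc ρ * (1 + α') / 2 * p₂ + 2 * c * s * e₂ + ρ * (1 - α') / 2 * q₂
          = ρ * (m₂ + (α' * d₂ + β' * e₂)) := by rw [h2cs]; exact hfin
        _ = ρ * (1 + κ') * m₂ := by rw [hw₂']; ring
        _ = p₂ + q₂ := by rw [hρκ, hm₂d]; ring

lemma dines_convex {Φ₁ Φ₂ : V → V → ℝ} (h₁ : IsSymBilin Φ₁) (h₂ : IsSymBilin Φ₂) :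
    Convex ℝ {z : ℝ × ℝ | ∃ y : V, Φ₁ y y = z.1 ∧ Φ₂ y y = z.2} := by
  rintro z₁ ⟨u, hu1, hu2⟩ z₂ ⟨v, hv1, hv2⟩ θ τ hθ hτ hθτ
  have hθs : Real.sqrt θ ^ 2 = θ := Real.sq_sqrt hθ
  have hτs : Real.sqrt τ ^ 2 = τ := Real.sq_sqrt hτ
  obtain ⟨y, hy1, hy2⟩ := dines_add h₁ h₂ (Real.sqrt θ • u) (Real.sqrt τ • v)
  refine ⟨y, ?_, ?_⟩
  · rw [hy1, h₁.sq_smul, h₁.sq_smul, hθs, hτs, hu1, hv1]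
    simp [Prod.fst_add, Prod.smul_fst, smul_eq_mul]
  · rw [hy2, h₂.sq_smul, h₂.sq_smul, hθs, hτs, hu2, hv2]
    simp [Prod.snd_add, Prod.smul_snd, smul_eq_mul]

/-- Yuan's lemma. -/
lemma yuan_lemma {Φ₁ Φ₂ : V → V → ℝ} (h₁ : IsSymBilin Φ₁) (h₂ : IsSymBilin Φ₂)
    (h : ∀ y : V, 0 ≤ max (Φ₁ y y) (Φ₂ y y)) :
    ∃ t : ℝ, t ∈ Icc (0:ℝ) 1 ∧ ∀ y : V, 0 ≤ t * Φ₁ y y + (1 - t) * Φ₂ y y := by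
  set K : Set (ℝ × ℝ) := {z : ℝ × ℝ | ∃ y : V, Φ₁ y y = z.1 ∧ Φ₂ y y = z.2} with hK
  set O : Set (ℝ × ℝ) := {z : ℝ × ℝ | z.1 < 0 ∧ z.2 < 0} with hO
  have hKconv : Convex ℝ K := dines_convex h₁ h₂
  have hOconv : Convex ℝ O := by
    have e1 : O = {z : ℝ × ℝ | z.1 < 0} ∩ {z : ℝ × ℝ | z.2 < 0} := rfl
    rw [e1]
    exact (convex_halfSpace_lt (⟨fun _ _ => rfl, fun _ _ => rfl⟩ : IsLinearMap ℝ
        (fun z : ℝ × ℝ => z.1)) 0).inter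
      (convex_halfSpace_lt (⟨fun _ _ => rfl, fun _ _ => rfl⟩ : IsLinearMap ℝ
        (fun z : ℝ × ℝ => z.2)) 0)
  have hOopen : IsOpen O :=
    (isOpen_lt continuous_fst continuous_const).inter (isOpen_lt continuous_snd continuous_const)
  have hdisj : Disjoint O K := by
    rw [Set.disjoint_left]
    rintro z ⟨hz1, hz2⟩ ⟨y, hy1, hy2⟩
    have := h y
    rw [← hy1] at hz1; rw [← hy2] at hz2
    rcases max_cases (Φ₁ y y) (Φ₂ y y) with ⟨he, _⟩ | ⟨he, _⟩ <;> rw [he] at this <;> linarith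
  obtain ⟨g, uu, hg1, hg2⟩ := geometric_hahn_banach_open hOconv hOopen hKconv hdisj
  set t₁ := g (1, 0) with ht₁
  set t₂ := g (0, 1) with ht₂
  have hgz : ∀ z : ℝ × ℝ, g z = z.1 * t₁ + z.2 * t₂ := by
    intro z
    have hzd : z = z.1 • ((1:ℝ), (0:ℝ)) + z.2 • ((0:ℝ), (1:ℝ)) := by
      ext <;> simp
    rw [ht₁, ht₂]
    conv_lhs => rw [hzd]
    rw [map_add, g.map_smul, g.map_smul]
    simp [smul_eq_mul]
  have h0K : (0, 0) ∈ K := ⟨0, h₁.zero, h₂.zero⟩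
  have huu0 : uu ≤ 0 := by
    have := hg2 _ h0K
    rw [hgz] at this; simpa using this
  have ht₁0 : 0 ≤ t₁ := by
    by_contra hneg
    push_neg at hneg
    set R := max 1 ((uu + t₂ + 1) / (-t₁)) with hR
    have hR1 : (1:ℝ) ≤ R := le_max_left _ _
    have hRge : (uu + t₂ + 1) / (-t₁) ≤ R := le_max_right _ _
    have hmem : ((-R : ℝ), (-1 : ℝ)) ∈ O := ⟨by simp; linarith, by norm_num⟩
    have := hg1 _ hmem
    rw [hgz] at this
    simp only at this
    have hkey : uu + t₂ + 1 ≤ R * (-t₁) := by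
      rw [div_le_iff₀ (by linarith : (0:ℝ) < -t₁)] at hRge
      linarith
    nlinarith
  have ht₂0 : 0 ≤ t₂ := by
    by_contra hneg
    push_neg at hneg
    set R := max 1 ((uu + t₁ + 1) / (-t₂)) with hR
    have hR1 : (1:ℝ) ≤ R := le_max_left _ _
    have hRge : (uu + t₁ + 1) / (-t₂) ≤ R := le_max_right _ _
    have hmem : ((-1 : ℝ), (-R : ℝ)) ∈ O := ⟨by norm_num, by simp; linarith⟩
    have := hg1 _ hmem
    rw [hgz] at this
    simp only at this
    have hkey : uu + t₁ + 1 ≤ R * (-t₂) := by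
      rw [div_le_iff₀ (by linarith : (0:ℝ) < -t₂)] at hRge
      linarith
    nlinarith
  have huu0' : 0 ≤ uu := by
    by_contra hneg
    push_neg at hneg
    set ε := -uu / (t₁ + t₂ + 1) with hε
    have hεpos : 0 < ε := by
      rw [hε]; exact div_pos (by linarith) (by linarith)
    have hmem : ((-ε : ℝ), (-ε : ℝ)) ∈ O := ⟨by simp [hεpos], by simp [hεpos]⟩
    have := hg1 _ hmem
    rw [hgz] at this
    simp only at this
    have hεid : ε * (t₁ + t₂ + 1) = -uu := by
      rw [hε]; field_simp
    nlinarith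
  have hsum : 0 < t₁ + t₂ := by
    rcases lt_or_eq_of_le (add_nonneg ht₁0 ht₂0) with hpos | heq
    · exact hpos
    · exfalso
      have h10 : t₁ = 0 := by linarith
      have h20 : t₂ = 0 := by linarith
      have hmem : ((-1 : ℝ), (-1 : ℝ)) ∈ O := ⟨by norm_num, by norm_num⟩
      have := hg1 _ hmem
      rw [hgz] at this
      simp only [h10, h20] at this
      norm_num at this
      linarith
  refine ⟨t₁ / (t₁ + t₂), ⟨by positivity, by rw [div_le_one hsum]; linarith⟩, ?_⟩
  intro y
  have hKy : ((Φ₁ y y, Φ₂ y y) : ℝ × ℝ) ∈ K := ⟨y, rfl, rfl⟩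
  have := hg2 _ hKy
  rw [hgz] at this
  simp only at this
  have h1t : 1 - t₁ / (t₁ + t₂) = t₂ / (t₁ + t₂) := by
    field_simp; ring
  rw [h1t]
  have : 0 ≤ Φ₁ y y * t₁ + Φ₂ y y * t₂ := le_trans huu0' this
  calc (0:ℝ) = (Φ₁ y y * t₁ + Φ₂ y y * t₂) * 0 := by ring
    _ ≤ (t₁ / (t₁ + t₂)) * Φ₁ y y + (t₂ / (t₁ + t₂)) * Φ₂ y y := by
        rw [div_mul_eq_mul_div, div_mul_eq_mul_div, ← add_div, le_div_iff₀ hsum]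
        nlinarith

end Yuan


section QF

variable {n : ℕ}

/-- Quadratic form on `(ℝ^n) × ℝ` determined by a matrix, a vector and a scalar. -/
noncomputable def qf (M : Matrix (Fin n) (Fin n) ℝ) (w : Fin n → ℝ) (r : ℝ)
    (y : (Fin n → ℝ) × ℝ) : ℝ :=
  (1 / 2) * (y.1 ⬝ᵥ (M *ᵥ y.1)) + y.2 * (w ⬝ᵥ y.1) + r * y.2 ^ 2

/-- Associated symmetric bilinear form. -/
noncomputable def bf (M : Matrix (Fin n) (Fin n) ℝ) (w : Fin n → ℝ) (r : ℝ)
    (y z : (Fin n → ℝ) × ℝ) : ℝ :=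
  (1 / 2) * (y.1 ⬝ᵥ (M *ᵥ z.1)) + (1 / 2) * (y.2 * (w ⬝ᵥ z.1) + z.2 * (w ⬝ᵥ y.1))
    + r * y.2 * z.2

lemma bf_self (M : Matrix (Fin n) (Fin n) ℝ) (w : Fin n → ℝ) (r : ℝ)
    (y : (Fin n → ℝ) × ℝ) : bf M w r y y = qf M w r y := by
  simp only [bf, qf]; ring

lemma bf_isSymBilin {M : Matrix (Fin n) (Fin n) ℝ} (hM : M.IsSymm)
    (w : Fin n → ℝ) (r : ℝ) : IsSymBilin (bf M w r) := by
  refine ⟨?_, ?_, ?_⟩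
  · intro u v z
    simp only [bf, Prod.fst_add, Prod.snd_add, add_dotProduct, dotProduct_add,
      Matrix.mulVec_add]
    ring
  · intro c u v
    simp only [bf, Prod.smul_fst, Prod.smul_snd, smul_eq_mul, smul_dotProduct,
      dotProduct_smul, Matrix.mulVec_smul]
    ring
  · intro u v
    simp only [bf]
    rw [dot_mulVec_symm hM u.1 v.1]
    ring

lemma stationarity_of_qf_nonneg {M : Matrix (Fin n) (Fin n) ℝ} (hM : M.IsSymm)
    {w : Fin n → ℝ} {r : ℝ} {xb : Fin n → ℝ}
    (hpos : ∀ y : (Fin n → ℝ) × ℝ, 0 ≤ qf M w r y)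
    (hzero : qf M w r (xb, 1) = 0) :
    M *ᵥ xb = -w := by
  have key : ∀ u : Fin n → ℝ, (M *ᵥ xb) ⬝ᵥ u + w ⬝ᵥ u = 0 := by
    intro u
    apply deriv_zero_of_quad_nonneg _ ((1 / 2) * (u ⬝ᵥ (M *ᵥ u)))
    intro s
    have h1 := hpos (xb + s • u, 1)
    have hexp : qf M w r (xb + s • u, 1)
        = qf M w r (xb, 1) + s * ((M *ᵥ xb) ⬝ᵥ u + w ⬝ᵥ u)
          + s ^ 2 * ((1 / 2) * (u ⬝ᵥ (M *ᵥ u))) := by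
      simp only [qf]
      simp only [Matrix.mulVec_add, Matrix.mulVec_smul, dotProduct_add, add_dotProduct,
        dotProduct_smul, smul_dotProduct, smul_eq_mul]
      have huMxb : (M *ᵥ xb) ⬝ᵥ u = xb ⬝ᵥ (M *ᵥ u) := by
        rw [dotProduct_comm]; exact dot_mulVec_symm hM u xb
      rw [huMxb, dot_mulVec_symm hM u xb]
      ring
    rw [hexp, hzero] at h1
    linarith
  funext i
  have := key (Pi.single i 1)
  rw [dotProduct_single, dotProduct_single] at this
  simp only [mul_one] at this
  simp only [Pi.neg_apply]
  linarith

end QF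

lemma quad_neg_large (c q s : ℝ) (hq : q < 0) (hs : max 0 (c / (-q)) < s) :
    s * c + s ^ 2 * q < 0 := by
  have hs0 : 0 < s := lt_of_le_of_lt (le_max_left _ _) hs
  have h1 : c / (-q) < s := lt_of_le_of_lt (le_max_right _ _) hs
  have h2 : c < s * (-q) := by rwa [div_lt_iff₀ (by linarith)] at h1
  nlinarith

lemma exists_s_five (c₁ c₂ c₃ c₄ c₅ q₁ q₂ q₃ q₄ q₅ : ℝ)
    (h₁ : q₁ < 0) (h₂ : q₂ < 0) (h₃ : q₃ < 0) (h₄ : q₄ < 0) (h₅ : q₅ < 0) :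
    ∃ s : ℝ, 0 < s ∧ s * c₁ + s ^ 2 * q₁ < 0 ∧ s * c₂ + s ^ 2 * q₂ < 0 ∧
      s * c₃ + s ^ 2 * q₃ < 0 ∧ s * c₄ + s ^ 2 * q₄ < 0 ∧ s * c₅ + s ^ 2 * q₅ < 0 := by
  set m := max (max (max 0 (c₁ / (-q₁))) (max 0 (c₂ / (-q₂))))
    (max (max 0 (c₃ / (-q₃))) (max (max 0 (c₄ / (-q₄))) (max 0 (c₅ / (-q₅))))) with hm
  have h0m : (0:ℝ) ≤ m := le_trans (le_max_left _ _)
    (le_trans (le_max_left _ _) (le_max_left _ _))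
  refine ⟨1 + m, by linarith, ?_, ?_, ?_, ?_, ?_⟩
  · exact quad_neg_large _ _ _ h₁ (by
      have h2 : max 0 (c₁ / (-q₁)) ≤ m := le_trans (le_max_left _ _) (le_max_left _ _)
      linarith)
  · exact quad_neg_large _ _ _ h₂ (by
      have h2 : max 0 (c₂ / (-q₂)) ≤ m := le_trans (le_max_right _ _) (le_max_left _ _)
      linarith)
  · exact quad_neg_large _ _ _ h₃ (by
      have h2 : max 0 (c₃ / (-q₃)) ≤ m := le_trans (le_max_left _ _) (le_max_right _ _)
      linarith)
  · exact quad_neg_large _ _ _ h₄ (by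
      have h2 : max 0 (c₄ / (-q₄)) ≤ m :=
        le_trans (le_trans (le_max_left _ _) (le_max_right _ _)) (le_max_right _ _)
      linarith)
  · exact quad_neg_large _ _ _ h₅ (by
      have h2 : max 0 (c₅ / (-q₅)) ≤ m :=
        le_trans (le_trans (le_max_right _ _) (le_max_right _ _)) (le_max_right _ _)
      linarith)


lemma sSup_comp_eq {n : ℕ} (B₁ B₂ : Matrix (Fin n) (Fin n) ℝ) (b₁ b₂ : Fin n → ℝ)
    (β μ₁ μ₂ : ℝ) (hμle : μ₁ ≤ μ₂) (x : Fin n → ℝ) (t δ' : ℝ) :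
    sSup ((fun μ => (1 / 2) * (x ⬝ᵥ ((B₁ + μ • B₂) *ᵥ x))
        + t * ((b₁ + δ' • b₂) ⬝ᵥ x) - β * t ^ 2) '' Icc μ₁ μ₂)
    = max (qf (B₁ + μ₁ • B₂) (b₁ + δ' • b₂) (-β) (x, t))
        (qf (B₁ + μ₂ • B₂) (b₁ + δ' • b₂) (-β) (x, t)) := by
  have hfun : (fun μ : ℝ => (1 / 2) * (x ⬝ᵥ ((B₁ + μ • B₂) *ᵥ x))
        + t * ((b₁ + δ' • b₂) ⬝ᵥ x) - β * t ^ 2)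
      = fun μ : ℝ => ((1 / 2) * (x ⬝ᵥ (B₁ *ᵥ x)) + t * ((b₁ + δ' • b₂) ⬝ᵥ x) - β * t ^ 2)
          + μ * ((1 / 2) * (x ⬝ᵥ (B₂ *ᵥ x))) := by
    funext μ
    simp only [Matrix.add_mulVec, Matrix.smul_mulVec, dotProduct_add, dotProduct_smul,
      smul_eq_mul]
    ring
  rw [hfun, sSup_affine_Icc _ _ _ _ hμle]
  congr 1 <;>
    (simp only [qf, Matrix.add_mulVec, Matrix.smul_mulVec, dotProduct_add, dotProduct_smul,
      smul_eq_mul]; ring)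

lemma mem_OmegaWbeta_iff (n : ℕ) (A B₁ B₂ : Matrix (Fin n) (Fin n) ℝ)
    (a b₁ b₂ : Fin n → ℝ) (γ β μ₁ μ₂ δ₁ δ₂ : ℝ) (hμle : μ₁ ≤ μ₂) (z : Fin 3 → ℝ) :
    z ∈ OmegaWbeta n A B₁ B₂ a b₁ b₂ γ β μ₁ μ₂ δ₁ δ₂ ↔
    ∃ (y : (Fin n → ℝ) × ℝ) (p : Fin 3 → ℝ), (∀ i, 0 < p i) ∧
      ![qf A a γ y,
        max (qf (B₁ + μ₁ • B₂) (b₁ + δ₁ • b₂) (-β) y) (qf (B₁ + μ₂ • B₂) (b₁ + δ₁ • b₂) (-β) y),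
        max (qf (B₁ + μ₁ • B₂) (b₁ + δ₂ • b₂) (-β) y) (qf (B₁ + μ₂ • B₂) (b₁ + δ₂ • b₂) (-β) y)]
        + p = z := by
  have hv : ∀ y : (Fin n → ℝ) × ℝ,
      ![(1 / 2) * (y.1 ⬝ᵥ (A *ᵥ y.1)) + y.2 * (a ⬝ᵥ y.1) + γ * y.2 ^ 2,
        sSup ((fun μ => (1 / 2) * (y.1 ⬝ᵥ ((B₁ + μ • B₂) *ᵥ y.1))
          + y.2 * ((b₁ + δ₁ • b₂) ⬝ᵥ y.1) - β * y.2 ^ 2) '' Icc μ₁ μ₂),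
        sSup ((fun μ => (1 / 2) * (y.1 ⬝ᵥ ((B₁ + μ • B₂) *ᵥ y.1))
          + y.2 * ((b₁ + δ₂ • b₂) ⬝ᵥ y.1) - β * y.2 ^ 2) '' Icc μ₁ μ₂)]
      = ![qf A a γ y,
        max (qf (B₁ + μ₁ • B₂) (b₁ + δ₁ • b₂) (-β) y) (qf (B₁ + μ₂ • B₂) (b₁ + δ₁ • b₂) (-β) y),
        max (qf (B₁ + μ₁ • B₂) (b₁ + δ₂ • b₂) (-β) y) (qf (B₁ + μ₂ • B₂) (b₁ + δ₂ • b₂) (-β) y)] := by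
    intro y
    rw [sSup_comp_eq B₁ B₂ b₁ b₂ β μ₁ μ₂ hμle y.1 y.2 δ₁,
      sSup_comp_eq B₁ B₂ b₁ b₂ β μ₁ μ₂ hμle y.1 y.2 δ₂]
    rfl
  unfold OmegaWbeta
  rw [Set.mem_add]
  constructor
  · rintro ⟨v, ⟨y, rfl⟩, p, hp, hvp⟩
    exact ⟨y, p, hp, by rw [← hv y]; exact hvp⟩
  · rintro ⟨y, p, hp, hyp⟩
    exact ⟨_, ⟨y, rfl⟩, p, hp, by beta_reduce; rw [hv y]; exact hyp⟩

set_option maxHeartbeats 2000000 in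
/-- Theorem 4, robust optimality for the one-sided problem. -/
theorem robust_optimality_one_sided (n : ℕ) (A B₁ B₂ : Matrix (Fin n) (Fin n) ℝ)
    (a b₁ b₂ : Fin n → ℝ) (β μ₁ μ₂ δ₁ δ₂ : ℝ)
    (hA : A.IsSymm) (hB₁ : B₁.IsSymm) (hB₂ : B₂.IsSymm)
    (hμ : μ₁ < μ₂) (hδ : δ₁ < δ₂)
    (feasible : (Fin n → ℝ) → Prop)
    (hfeas : ∀ x, feasible x ↔ ∀ μ ∈ Icc μ₁ μ₂, ∀ δ ∈ Icc δ₁ δ₂,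
      (1 / 2) * (x ⬝ᵥ ((B₁ + μ • B₂) *ᵥ x)) + (b₁ + δ • b₂) ⬝ᵥ x ≤ β)
    (f : (Fin n → ℝ) → ℝ)
    (hf : ∀ x, f x = (1 / 2) * (x ⬝ᵥ (A *ᵥ x)) + a ⬝ᵥ x)
    (xbar : Fin n → ℝ) (hxbar : feasible xbar)
    (hconv : Convex ℝ (OmegaWbeta n A B₁ B₂ a b₁ b₂ (-f xbar) β μ₁ μ₂ δ₁ δ₂))
    (hSlater : ∃ x₀ : Fin n → ℝ, ∀ μ ∈ Icc μ₁ μ₂, ∀ δ ∈ Icc δ₁ δ₂,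
      (1 / 2) * (x₀ ⬝ᵥ ((B₁ + μ • B₂) *ᵥ x₀)) + (b₁ + δ • b₂) ⬝ᵥ x₀ < β) :
    (∀ x : Fin n → ℝ, feasible x → f xbar ≤ f x)
    ↔
    (∃ lam : ℝ, 0 ≤ lam ∧ ∃ μ ∈ Icc μ₁ μ₂, ∃ δ ∈ Icc δ₁ δ₂,
      ((A + lam • (B₁ + μ • B₂)) *ᵥ xbar = -(a + lam • (b₁ + δ • b₂))) ∧
      (lam * ((1 / 2) * (xbar ⬝ᵥ ((B₁ + μ • B₂) *ᵥ xbar))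
          + (b₁ + δ • b₂) ⬝ᵥ xbar - β) = 0) ∧
      (∀ z : Fin n → ℝ, 0 ≤ z ⬝ᵥ ((A + lam • (B₁ + μ • B₂)) *ᵥ z))) := by
  have hμle : μ₁ ≤ μ₂ := hμ.le
  have hδle : δ₁ ≤ δ₂ := hδ.le
  have hfeasb := (hfeas xbar).mp hxbar
  have hγ0 : qf A a (-f xbar) (xbar, 1) = 0 := by
    simp only [qf]
    rw [hf xbar]; ring
  have hsymQ : ∀ μ' : ℝ, (B₁ + μ' • B₂).IsSymm := by
    intro μ'
    unfold Matrix.IsSymm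
    rw [Matrix.transpose_add, Matrix.transpose_smul, hB₁, hB₂]
  have hsymM : ∀ lam μ' : ℝ, (A + lam • (B₁ + μ' • B₂)).IsSymm := by
    intro lam μ'
    unfold Matrix.IsSymm
    rw [Matrix.transpose_add, Matrix.transpose_smul, Matrix.transpose_add,
      Matrix.transpose_smul, hA, hB₁, hB₂]
  -- decomposition of the constraint function
  have hgd : ∀ (x' : Fin n → ℝ) (μ' δ' : ℝ),
      (1 / 2) * (x' ⬝ᵥ ((B₁ + μ' • B₂) *ᵥ x')) + (b₁ + δ' • b₂) ⬝ᵥ x'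
      = ((1 / 2) * (x' ⬝ᵥ (B₁ *ᵥ x')) + b₁ ⬝ᵥ x') + μ' * ((1 / 2) * (x' ⬝ᵥ (B₂ *ᵥ x')))
        + δ' * (b₂ ⬝ᵥ x') := by
    intro x' μ' δ'
    simp only [Matrix.add_mulVec, Matrix.smul_mulVec, dotProduct_add, dotProduct_smul,
      add_dotProduct, smul_dotProduct, smul_eq_mul]
    ring
  have hbox : ∀ x' : Fin n → ℝ,
      ((1 / 2) * (x' ⬝ᵥ ((B₁ + μ₁ • B₂) *ᵥ x')) + (b₁ + δ₁ • b₂) ⬝ᵥ x' ≤ β) →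
      ((1 / 2) * (x' ⬝ᵥ ((B₁ + μ₂ • B₂) *ᵥ x')) + (b₁ + δ₁ • b₂) ⬝ᵥ x' ≤ β) →
      ((1 / 2) * (x' ⬝ᵥ ((B₁ + μ₁ • B₂) *ᵥ x')) + (b₁ + δ₂ • b₂) ⬝ᵥ x' ≤ β) →
      ((1 / 2) * (x' ⬝ᵥ ((B₁ + μ₂ • B₂) *ᵥ x')) + (b₁ + δ₂ • b₂) ⬝ᵥ x' ≤ β) →
      feasible x' := by
    intro x' h11 h21 h12 h22
    rw [hfeas]
    intro μ' hμ' δ' hδ'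
    rw [hgd] at h11 h21 h12 h22 ⊢
    obtain ⟨hμ'l, hμ'r⟩ := hμ'
    obtain ⟨hδ'l, hδ'r⟩ := hδ'
    rcases le_total 0 ((1 / 2) * (x' ⬝ᵥ (B₂ *ᵥ x'))) with hP | hP <;>
      rcases le_total 0 (b₂ ⬝ᵥ x') with hR | hR <;> nlinarith
  constructor
  · -- hard direction
    intro hopt
    -- Step A : 0 ∉ Ω
    have h0notin : (0 : Fin 3 → ℝ) ∉ OmegaWbeta n A B₁ B₂ a b₁ b₂ (-f xbar) β μ₁ μ₂ δ₁ δ₂ := by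
      intro h0
      rw [mem_OmegaWbeta_iff n A B₁ B₂ a b₁ b₂ (-f xbar) β μ₁ μ₂ δ₁ δ₂ hμle] at h0
      obtain ⟨y, p, hp, hyp⟩ := h0
      obtain ⟨x, t⟩ := y
      have hc0 : qf A a (-f xbar) (x, t) < 0 := by
        have h := congrFun hyp 0
        simp only [Pi.add_apply, Pi.zero_apply, Matrix.cons_val_zero] at h
        have := hp 0; linarith
      have hc1 : max (qf (B₁ + μ₁ • B₂) (b₁ + δ₁ • b₂) (-β) (x, t))
          (qf (B₁ + μ₂ • B₂) (b₁ + δ₁ • b₂) (-β) (x, t)) < 0 := by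
        have h := congrFun hyp 1
        simp only [Pi.add_apply, Pi.zero_apply, Matrix.cons_val_one, Matrix.cons_val_zero, Matrix.head_cons] at h
        have := hp 1; linarith
      have hc2 : max (qf (B₁ + μ₁ • B₂) (b₁ + δ₂ • b₂) (-β) (x, t))
          (qf (B₁ + μ₂ • B₂) (b₁ + δ₂ • b₂) (-β) (x, t)) < 0 := by
        have h := congrFun hyp 2
        simp only [Pi.add_apply, Pi.zero_apply, Matrix.cons_val_two, Matrix.tail_cons,
          Matrix.head_cons] at h
        have := hp 2; linarith
      have h11 : qf (B₁ + μ₁ • B₂) (b₁ + δ₁ • b₂) (-β) (x, t) < 0 :=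
        lt_of_le_of_lt (le_max_left _ _) hc1
      have h21 : qf (B₁ + μ₂ • B₂) (b₁ + δ₁ • b₂) (-β) (x, t) < 0 :=
        lt_of_le_of_lt (le_max_right _ _) hc1
      have h12 : qf (B₁ + μ₁ • B₂) (b₁ + δ₂ • b₂) (-β) (x, t) < 0 :=
        lt_of_le_of_lt (le_max_left _ _) hc2
      have h22 : qf (B₁ + μ₂ • B₂) (b₁ + δ₂ • b₂) (-β) (x, t) < 0 :=
        lt_of_le_of_lt (le_max_right _ _) hc2
      by_cases ht : t = 0
      · subst ht
        simp only [qf, mul_zero, zero_mul, add_zero, ne_eq, OfNat.ofNat_ne_zero,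
          not_false_eq_true, zero_pow] at hc0 h11 h21 h12 h22
        -- recession direction
        obtain ⟨s, hspos, hs11, hs21, hs12, hs22, hsD⟩ :=
          exists_s_five
            (xbar ⬝ᵥ ((B₁ + μ₁ • B₂) *ᵥ x) + (b₁ + δ₁ • b₂) ⬝ᵥ x)
            (xbar ⬝ᵥ ((B₁ + μ₂ • B₂) *ᵥ x) + (b₁ + δ₁ • b₂) ⬝ᵥ x)
            (xbar ⬝ᵥ ((B₁ + μ₁ • B₂) *ᵥ x) + (b₁ + δ₂ • b₂) ⬝ᵥ x)
            (xbar ⬝ᵥ ((B₁ + μ₂ • B₂) *ᵥ x) + (b₁ + δ₂ • b₂) ⬝ᵥ x)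
            (xbar ⬝ᵥ (A *ᵥ x) + a ⬝ᵥ x)
            ((1 / 2) * (x ⬝ᵥ ((B₁ + μ₁ • B₂) *ᵥ x)))
            ((1 / 2) * (x ⬝ᵥ ((B₁ + μ₂ • B₂) *ᵥ x)))
            ((1 / 2) * (x ⬝ᵥ ((B₁ + μ₁ • B₂) *ᵥ x)))
            ((1 / 2) * (x ⬝ᵥ ((B₁ + μ₂ • B₂) *ᵥ x)))
            ((1 / 2) * (x ⬝ᵥ (A *ᵥ x)))
            h11 h21 h12 h22 hc0
        have hexp : ∀ (Q : Matrix (Fin n) (Fin n) ℝ), Q.IsSymm → ∀ c : Fin n → ℝ,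
            (1 / 2) * ((xbar + s • x) ⬝ᵥ (Q *ᵥ (xbar + s • x))) + c ⬝ᵥ (xbar + s • x)
            = ((1 / 2) * (xbar ⬝ᵥ (Q *ᵥ xbar)) + c ⬝ᵥ xbar)
              + s * (xbar ⬝ᵥ (Q *ᵥ x) + c ⬝ᵥ x)
              + s ^ 2 * ((1 / 2) * (x ⬝ᵥ (Q *ᵥ x))) := by
          intro Q hQ c
          have hswap := dot_mulVec_symm hQ x xbar
          simp only [Matrix.mulVec_add, Matrix.mulVec_smul, dotProduct_add, add_dotProduct,
            dotProduct_smul, smul_dotProduct, smul_eq_mul]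
          rw [hswap]
          ring
        have hfeasnew : feasible (xbar + s • x) := by
          apply hbox (xbar + s • x) <;> rw [hexp _ (hsymQ _) _]
          · have hb := hfeasb μ₁ ⟨le_refl _, hμle⟩ δ₁ ⟨le_refl _, hδle⟩
            linarith
          · have hb := hfeasb μ₂ ⟨hμle, le_refl _⟩ δ₁ ⟨le_refl _, hδle⟩
            linarith
          · have hb := hfeasb μ₁ ⟨le_refl _, hμle⟩ δ₂ ⟨hδle, le_refl _⟩
            linarith
          · have hb := hfeasb μ₂ ⟨hμle, le_refl _⟩ δ₂ ⟨hδle, le_refl _⟩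
            linarith
        have hobj : f (xbar + s • x) < f xbar := by
          rw [hf (xbar + s • x)]
          rw [hexp A hA a]
          rw [← hf xbar]
          linarith
        exact absurd (hopt _ hfeasnew) (not_le.mpr hobj)
      · -- t ≠ 0 : scale back
        have htpos : 0 < (t⁻¹) ^ 2 := by positivity
        have hscale : ∀ (M : Matrix (Fin n) (Fin n) ℝ) (w : Fin n → ℝ) (r : ℝ),
            (1 / 2) * ((t⁻¹ • x) ⬝ᵥ (M *ᵥ (t⁻¹ • x))) + w ⬝ᵥ (t⁻¹ • x) + r
            = (t⁻¹) ^ 2 * qf M w r (x, t) := by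
          intro M w r
          simp only [qf, smul_dotProduct, dotProduct_smul, Matrix.mulVec_smul, smul_eq_mul]
          field_simp
        have hfeasx' : feasible (t⁻¹ • x) := by
          apply hbox (t⁻¹ • x)
          · have h := hscale (B₁ + μ₁ • B₂) (b₁ + δ₁ • b₂) (-β)
            linarith [mul_neg_of_pos_of_neg htpos h11]
          · have h := hscale (B₁ + μ₂ • B₂) (b₁ + δ₁ • b₂) (-β)
            linarith [mul_neg_of_pos_of_neg htpos h21]
          · have h := hscale (B₁ + μ₁ • B₂) (b₁ + δ₂ • b₂) (-β)
            linarith [mul_neg_of_pos_of_neg htpos h12]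
          · have h := hscale (B₁ + μ₂ • B₂) (b₁ + δ₂ • b₂) (-β)
            linarith [mul_neg_of_pos_of_neg htpos h22]
        have hobj : f (t⁻¹ • x) < f xbar := by
          have h := hscale A a (-f xbar)
          have h2 := mul_neg_of_pos_of_neg htpos hc0
          rw [hf (t⁻¹ • x)]
          linarith
        exact absurd (hopt _ hfeasx') (not_le.mpr hobj)
    -- Step B : separation
    have horth : IsOpen {z : Fin 3 → ℝ | ∀ i, 0 < z i} := by
      have he : {z : Fin 3 → ℝ | ∀ i, 0 < z i} = ⋂ i, {z : Fin 3 → ℝ | 0 < z i} := by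
        ext z; simp
      rw [he]
      exact isOpen_iInter_of_finite fun i => isOpen_lt continuous_const (continuous_apply i)
    have hopen : IsOpen (OmegaWbeta n A B₁ B₂ a b₁ b₂ (-f xbar) β μ₁ μ₂ δ₁ δ₂) :=
      horth.add_left
    obtain ⟨gl, hgl⟩ := geometric_hahn_banach_point_open hconv hopen h0notin
    rw [map_zero] at hgl
    set θ : Fin 3 → ℝ := fun i => gl (Pi.single i 1) with hθ
    have hglz : ∀ z : Fin 3 → ℝ, gl z = z 0 * θ 0 + z 1 * θ 1 + z 2 * θ 2 := by
      intro z
      have hz : z = z 0 • (Pi.single 0 1 : Fin 3 → ℝ) + z 1 • (Pi.single 1 1 : Fin 3 → ℝ) + z 2 • (Pi.single 2 1 : Fin 3 → ℝ) := by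
        funext i; fin_cases i <;> simp [Pi.single_apply]
      conv_lhs => rw [hz]
      rw [map_add, map_add, gl.map_smul, gl.map_smul, gl.map_smul]
      simp only [hθ, smul_eq_mul]
    have hmemΩ : ∀ (y : (Fin n → ℝ) × ℝ) (p : Fin 3 → ℝ), (∀ i, 0 < p i) →
        (![qf A a (-f xbar) y,
          max (qf (B₁ + μ₁ • B₂) (b₁ + δ₁ • b₂) (-β) y) (qf (B₁ + μ₂ • B₂) (b₁ + δ₁ • b₂) (-β) y),
          max (qf (B₁ + μ₁ • B₂) (b₁ + δ₂ • b₂) (-β) y) (qf (B₁ + μ₂ • B₂) (b₁ + δ₂ • b₂) (-β) y)]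
          + p) ∈ OmegaWbeta n A B₁ B₂ a b₁ b₂ (-f xbar) β μ₁ μ₂ δ₁ δ₂ := by
      intro y p hp
      rw [mem_OmegaWbeta_iff n A B₁ B₂ a b₁ b₂ (-f xbar) β μ₁ μ₂ δ₁ δ₂ hμle]
      exact ⟨y, p, hp, rfl⟩
    have hgW : ∀ y : (Fin n → ℝ) × ℝ,
        gl ![qf A a (-f xbar) y,
          max (qf (B₁ + μ₁ • B₂) (b₁ + δ₁ • b₂) (-β) y) (qf (B₁ + μ₂ • B₂) (b₁ + δ₁ • b₂) (-β) y),
          max (qf (B₁ + μ₁ • B₂) (b₁ + δ₂ • b₂) (-β) y) (qf (B₁ + μ₂ • B₂) (b₁ + δ₂ • b₂) (-β) y)]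
        = qf A a (-f xbar) y * θ 0
          + max (qf (B₁ + μ₁ • B₂) (b₁ + δ₁ • b₂) (-β) y)
              (qf (B₁ + μ₂ • B₂) (b₁ + δ₁ • b₂) (-β) y) * θ 1
          + max (qf (B₁ + μ₁ • B₂) (b₁ + δ₂ • b₂) (-β) y)
              (qf (B₁ + μ₂ • B₂) (b₁ + δ₂ • b₂) (-β) y) * θ 2 := by
      intro y
      rw [hglz]
      simp [Matrix.cons_val_zero, Matrix.cons_val_one, Matrix.head_cons]
    have hq00 : ∀ (M : Matrix (Fin n) (Fin n) ℝ) (w : Fin n → ℝ) (r : ℝ),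
        qf M w r ((0 : Fin n → ℝ), (0 : ℝ)) = 0 := by
      intro M w r
      simp [qf]
    have hS : 0 < θ 0 + θ 1 + θ 2 := by
      have hmem := hmemΩ (0, 0) (fun _ => 1) (fun i => one_pos)
      have h := hgl _ hmem
      rw [map_add, hgW (0, 0)] at h
      rw [hq00, hq00, hq00, hq00, hq00] at h
      have hone : gl (fun _ => (1 : ℝ)) = θ 0 + θ 1 + θ 2 := by
        rw [hglz]; ring
      rw [hone] at h
      simpa using h
    have hθnn : ∀ i, 0 ≤ θ i := by
      intro i
      by_contra hneg
      push_neg at hneg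
      set R := (θ 0 + θ 1 + θ 2 + 1) / (-θ i) with hR
      have hRpos : 0 < R := div_pos (by linarith) (by linarith)
      have hppos : ∀ j : Fin 3, 0 < ((fun _ : Fin 3 => (1:ℝ)) + R • (Pi.single i 1 : Fin 3 → ℝ)) j := by
        intro j
        simp only [Pi.add_apply, Pi.smul_apply, smul_eq_mul, Pi.single_apply]
        split <;> [nlinarith; norm_num]
      have hmem := hmemΩ (0, 0) _ hppos
      have h := hgl _ hmem
      rw [map_add, hgW (0, 0)] at h
      rw [hq00, hq00, hq00, hq00, hq00] at h
      rw [map_add, gl.map_smul] at h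
      have hone : gl (fun _ => (1 : ℝ)) = θ 0 + θ 1 + θ 2 := by rw [hglz]; ring
      have hsingle : gl (Pi.single i 1) = θ i := rfl
      rw [hone, hsingle] at h
      have hne : -θ i ≠ 0 := ne_of_gt (neg_pos.mpr hneg)
      have hmul0 : R * (-θ i) = θ 0 + θ 1 + θ 2 + 1 := by
        rw [hR]; exact div_mul_cancel₀ _ hne
      have hmul : R * θ i = -(θ 0 + θ 1 + θ 2 + 1) := by
        linear_combination (-1 : ℝ) * hmul0
      simp only [smul_eq_mul, max_self] at h
      nlinarith
    have hθquad : ∀ y : (Fin n → ℝ) × ℝ,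
        0 ≤ qf A a (-f xbar) y * θ 0
          + max (qf (B₁ + μ₁ • B₂) (b₁ + δ₁ • b₂) (-β) y)
              (qf (B₁ + μ₂ • B₂) (b₁ + δ₁ • b₂) (-β) y) * θ 1
          + max (qf (B₁ + μ₁ • B₂) (b₁ + δ₂ • b₂) (-β) y)
              (qf (B₁ + μ₂ • B₂) (b₁ + δ₂ • b₂) (-β) y) * θ 2 := by
      intro y
      by_contra hneg
      push_neg at hneg
      rw [← hgW y] at hneg
      set G := gl ![qf A a (-f xbar) y,
          max (qf (B₁ + μ₁ • B₂) (b₁ + δ₁ • b₂) (-β) y) (qf (B₁ + μ₂ • B₂) (b₁ + δ₁ • b₂) (-β) y),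
          max (qf (B₁ + μ₁ • B₂) (b₁ + δ₂ • b₂) (-β) y) (qf (B₁ + μ₂ • B₂) (b₁ + δ₂ • b₂) (-β) y)]
        with hG
      set ε := -G / (θ 0 + θ 1 + θ 2 + 1) with hεd
      have hεpos : 0 < ε := div_pos (by linarith) (by linarith)
      have hmem := hmemΩ y (fun _ => ε) (fun i => hεpos)
      have h := hgl _ hmem
      rw [map_add, ← hG] at h
      have hconst : gl (fun _ => ε) = ε * (θ 0 + θ 1 + θ 2) := by rw [hglz]; ring
      rw [hconst] at h
      have hεid : ε * (θ 0 + θ 1 + θ 2 + 1) = -G := by rw [hεd]; field_simp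
      nlinarith
    -- Slater point gives θ 0 > 0
    obtain ⟨x₀, hx₀⟩ := hSlater
    have hsl : ∀ (μ' δ' : ℝ), μ' ∈ Icc μ₁ μ₂ → δ' ∈ Icc δ₁ δ₂ →
        qf (B₁ + μ' • B₂) (b₁ + δ' • b₂) (-β) (x₀, 1) < 0 := by
      intro μ' δ' hμ' hδ'
      have := hx₀ μ' hμ' δ' hδ'
      simp only [qf]
      nlinarith
    have hθ0pos : 0 < θ 0 := by
      rcases lt_or_eq_of_le (hθnn 0) with h | h
      · exact h
      · exfalso
        have hq := hθquad (x₀, 1)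
        have hm1 : max (qf (B₁ + μ₁ • B₂) (b₁ + δ₁ • b₂) (-β) (x₀, 1))
            (qf (B₁ + μ₂ • B₂) (b₁ + δ₁ • b₂) (-β) (x₀, 1)) < 0 :=
          max_lt (hsl μ₁ δ₁ ⟨le_refl _, hμle⟩ ⟨le_refl _, hδle⟩)
            (hsl μ₂ δ₁ ⟨hμle, le_refl _⟩ ⟨le_refl _, hδle⟩)
        have hm2 : max (qf (B₁ + μ₁ • B₂) (b₁ + δ₂ • b₂) (-β) (x₀, 1))
            (qf (B₁ + μ₂ • B₂) (b₁ + δ₂ • b₂) (-β) (x₀, 1)) < 0 :=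
          max_lt (hsl μ₁ δ₂ ⟨le_refl _, hμle⟩ ⟨hδle, le_refl _⟩)
            (hsl μ₂ δ₂ ⟨hμle, le_refl _⟩ ⟨hδle, le_refl _⟩)
        have h1 := hθnn 1
        have h2 := hθnn 2
        rw [← h] at hq
        have hp1 : max (qf (B₁ + μ₁ • B₂) (b₁ + δ₁ • b₂) (-β) (x₀, 1))
            (qf (B₁ + μ₂ • B₂) (b₁ + δ₁ • b₂) (-β) (x₀, 1)) * θ 1 ≤ 0 :=
          mul_nonpos_iff.mpr (Or.inr ⟨hm1.le, h1⟩)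
        have hp2 : max (qf (B₁ + μ₁ • B₂) (b₁ + δ₂ • b₂) (-β) (x₀, 1))
            (qf (B₁ + μ₂ • B₂) (b₁ + δ₂ • b₂) (-β) (x₀, 1)) * θ 2 ≤ 0 :=
          mul_nonpos_iff.mpr (Or.inr ⟨hm2.le, h2⟩)
        have hθ1 : θ 1 = 0 := by
          by_contra hne
          have hpos : 0 < θ 1 := lt_of_le_of_ne h1 (Ne.symm hne)
          have hlt := mul_neg_of_neg_of_pos hm1 hpos
          linarith
        have hθ2 : θ 2 = 0 := by
          by_contra hne
          have hpos : 0 < θ 2 := lt_of_le_of_ne h2 (Ne.symm hne)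
          have hlt := mul_neg_of_neg_of_pos hm2 hpos
          linarith
        rw [← h] at hS
        rw [hθ1, hθ2] at hS
        norm_num at hS
    set l₁ := θ 1 / θ 0 with hl₁
    set l₂ := θ 2 / θ 0 with hl₂
    have hl₁nn : 0 ≤ l₁ := div_nonneg (hθnn 1) hθ0pos.le
    have hl₂nn : 0 ≤ l₂ := div_nonneg (hθnn 2) hθ0pos.le
    have hmain : ∀ y : (Fin n → ℝ) × ℝ,
        0 ≤ qf A a (-f xbar) y
          + l₁ * max (qf (B₁ + μ₁ • B₂) (b₁ + δ₁ • b₂) (-β) y)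
              (qf (B₁ + μ₂ • B₂) (b₁ + δ₁ • b₂) (-β) y)
          + l₂ * max (qf (B₁ + μ₁ • B₂) (b₁ + δ₂ • b₂) (-β) y)
              (qf (B₁ + μ₂ • B₂) (b₁ + δ₂ • b₂) (-β) y) := by
      intro y
      have h := hθquad y
      have heq : qf A a (-f xbar) y
          + l₁ * max (qf (B₁ + μ₁ • B₂) (b₁ + δ₁ • b₂) (-β) y)
              (qf (B₁ + μ₂ • B₂) (b₁ + δ₁ • b₂) (-β) y)
          + l₂ * max (qf (B₁ + μ₁ • B₂) (b₁ + δ₂ • b₂) (-β) y)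
              (qf (B₁ + μ₂ • B₂) (b₁ + δ₂ • b₂) (-β) y)
          = (qf A a (-f xbar) y * θ 0
            + max (qf (B₁ + μ₁ • B₂) (b₁ + δ₁ • b₂) (-β) y)
                (qf (B₁ + μ₂ • B₂) (b₁ + δ₁ • b₂) (-β) y) * θ 1
            + max (qf (B₁ + μ₁ • B₂) (b₁ + δ₂ • b₂) (-β) y)
                (qf (B₁ + μ₂ • B₂) (b₁ + δ₂ • b₂) (-β) y) * θ 2) / θ 0 := by
        rw [hl₁, hl₂]; field_simp
      rw [heq]
      exact div_nonneg h hθ0pos.le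
    rcases eq_or_lt_of_le (add_nonneg hl₁nn hl₂nn) with hlam0 | hlampos
    · -- lam = 0 case
      have hl₁0 : l₁ = 0 := by linarith
      have hl₂0 : l₂ = 0 := by linarith
      have hqA : ∀ y : (Fin n → ℝ) × ℝ, 0 ≤ qf A a (-f xbar) y := by
        intro y
        have := hmain y
        rw [hl₁0, hl₂0] at this
        linarith
      have hst := stationarity_of_qf_nonneg hA hqA hγ0
      refine ⟨0, le_refl _, μ₁, ⟨le_refl _, hμle⟩, δ₁, ⟨le_refl _, hδle⟩, ?_, by ring, ?_⟩
      · simpa using hst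
      · intro z
        have := hqA (z, 0)
        simp only [qf, mul_zero, zero_mul, add_zero, ne_eq, OfNat.ofNat_ne_zero,
          not_false_eq_true, zero_pow] at this
        simpa using (by linarith : (0:ℝ) ≤ z ⬝ᵥ (A *ᵥ z))
    · -- lam > 0 case
      set lam := l₁ + l₂ with hlamd
      set δc := (l₁ * δ₁ + l₂ * δ₂) / lam with hδcd
      have hδcmem : δc ∈ Icc δ₁ δ₂ := by
        constructor
        · rw [hδcd, le_div_iff₀ hlampos, hlamd]
          linarith [mul_nonneg hl₂nn (sub_nonneg.mpr hδle)]
        · rw [hδcd, div_le_iff₀ hlampos, hlamd]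
          linarith [mul_nonneg hl₁nn (sub_nonneg.mpr hδle)]
      have hδsum : l₁ * δ₁ + l₂ * δ₂ = lam * δc := by
        rw [hδcd]; field_simp
      have hq : ∀ (μ' δ' : ℝ) (y : (Fin n → ℝ) × ℝ),
          qf (B₁ + μ' • B₂) (b₁ + δ' • b₂) (-β) y
          = qf B₁ b₁ (-β) y + μ' * ((1 / 2) * (y.1 ⬝ᵥ (B₂ *ᵥ y.1)))
            + δ' * (y.2 * (b₂ ⬝ᵥ y.1)) := by
        intro μ' δ' y
        simp only [qf, Matrix.add_mulVec, Matrix.smul_mulVec, dotProduct_add,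
          dotProduct_smul, add_dotProduct, smul_dotProduct, smul_eq_mul]
        ring
      have hmax2 : ∀ y : (Fin n → ℝ) × ℝ,
          0 ≤ max (qf A a (-f xbar) y + lam * qf (B₁ + μ₁ • B₂) (b₁ + δc • b₂) (-β) y)
            (qf A a (-f xbar) y + lam * qf (B₁ + μ₂ • B₂) (b₁ + δc • b₂) (-β) y) := by
        intro y
        have h := hmain y
        have hcomb : l₁ * max (qf (B₁ + μ₁ • B₂) (b₁ + δ₁ • b₂) (-β) y)
              (qf (B₁ + μ₂ • B₂) (b₁ + δ₁ • b₂) (-β) y)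
            + l₂ * max (qf (B₁ + μ₁ • B₂) (b₁ + δ₂ • b₂) (-β) y)
              (qf (B₁ + μ₂ • B₂) (b₁ + δ₂ • b₂) (-β) y)
            = lam * max (qf (B₁ + μ₁ • B₂) (b₁ + δc • b₂) (-β) y)
              (qf (B₁ + μ₂ • B₂) (b₁ + δc • b₂) (-β) y) := by
          rw [hq μ₁ δ₁ y, hq μ₂ δ₁ y, hq μ₁ δc y, hq μ₂ δc y, hq μ₁ δ₂ y, hq μ₂ δ₂ y]
          set b0 := qf B₁ b₁ (-β) y
          set dd := (1 / 2) * (y.1 ⬝ᵥ (B₂ *ᵥ y.1))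
          set rr := y.2 * (b₂ ⬝ᵥ y.1)
          have hmaxadd : ∀ c' : ℝ, max (b0 + μ₁ * dd + c') (b0 + μ₂ * dd + c')
              = b0 + c' + max (μ₁ * dd) (μ₂ * dd) := by
            intro c'
            rcases le_total (μ₁ * dd) (μ₂ * dd) with hle | hle
            · rw [max_eq_right hle, max_eq_right (by linarith : b0 + μ₁ * dd + c' ≤ b0 + μ₂ * dd + c')]
              ring
            · rw [max_eq_left hle, max_eq_left (by linarith : b0 + μ₂ * dd + c' ≤ b0 + μ₁ * dd + c')]
              ring
          rw [hmaxadd (δ₁ * rr), hmaxadd (δc * rr), hmaxadd (δ₂ * rr)]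
          have : lam * (b0 + δc * rr + max (μ₁ * dd) (μ₂ * dd))
              = (l₁ + l₂) * (b0 + max (μ₁ * dd) (μ₂ * dd)) + (lam * δc) * rr := by
            rw [hlamd]; ring
          rw [this, ← hδsum]
          ring
        have h' : 0 ≤ qf A a (-f xbar) y
            + lam * max (qf (B₁ + μ₁ • B₂) (b₁ + δc • b₂) (-β) y)
              (qf (B₁ + μ₂ • B₂) (b₁ + δc • b₂) (-β) y) := by linarith
        rcases le_total (qf (B₁ + μ₁ • B₂) (b₁ + δc • b₂) (-β) y)
          (qf (B₁ + μ₂ • B₂) (b₁ + δc • b₂) (-β) y) with hle | hle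
        · rw [max_eq_right hle] at h'
          apply le_max_of_le_right
          linarith
        · rw [max_eq_left hle] at h'
          apply le_max_of_le_left
          linarith
      have hqfcomb : ∀ (μ' : ℝ) (y : (Fin n → ℝ) × ℝ),
          qf A a (-f xbar) y + lam * qf (B₁ + μ' • B₂) (b₁ + δc • b₂) (-β) y
          = qf (A + lam • (B₁ + μ' • B₂)) (a + lam • (b₁ + δc • b₂)) (-f xbar - lam * β) y := by
        intro μ' y
        simp only [qf, Matrix.add_mulVec, Matrix.smul_mulVec, dotProduct_add,
          dotProduct_smul, add_dotProduct, smul_dotProduct, smul_eq_mul]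
        ring
      obtain ⟨tt, ⟨htt0, htt1⟩, hyuan⟩ := yuan_lemma
        (bf_isSymBilin (hsymM lam μ₁) (a + lam • (b₁ + δc • b₂)) (-f xbar - lam * β))
        (bf_isSymBilin (hsymM lam μ₂) (a + lam • (b₁ + δc • b₂)) (-f xbar - lam * β))
        (by
          intro y
          rw [bf_self, bf_self, ← hqfcomb μ₁ y, ← hqfcomb μ₂ y]
          exact hmax2 y)
      set μc := tt * μ₁ + (1 - tt) * μ₂ with hμcd
      have hμcmem : μc ∈ Icc μ₁ μ₂ := by
        constructor
        · rw [hμcd]; nlinarith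
        · rw [hμcd]; nlinarith
      have hNpos : ∀ y : (Fin n → ℝ) × ℝ,
          0 ≤ qf (A + lam • (B₁ + μc • B₂)) (a + lam • (b₁ + δc • b₂)) (-f xbar - lam * β) y := by
        intro y
        have h := hyuan y
        rw [bf_self, bf_self] at h
        have hconv2 : tt * qf (A + lam • (B₁ + μ₁ • B₂)) (a + lam • (b₁ + δc • b₂))
              (-f xbar - lam * β) y
            + (1 - tt) * qf (A + lam • (B₁ + μ₂ • B₂)) (a + lam • (b₁ + δc • b₂))
              (-f xbar - lam * β) y
            = qf (A + lam • (B₁ + μc • B₂)) (a + lam • (b₁ + δc • b₂)) (-f xbar - lam * β) y := by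
          simp only [qf, hμcd, Matrix.add_mulVec, Matrix.smul_mulVec, dotProduct_add,
            dotProduct_smul, smul_eq_mul]
          ring
        rw [← hconv2]
        exact h
      have hgxbar : (1 / 2) * (xbar ⬝ᵥ ((B₁ + μc • B₂) *ᵥ xbar)) + (b₁ + δc • b₂) ⬝ᵥ xbar ≤ β :=
        hfeasb μc hμcmem δc hδcmem
      have hval : qf (A + lam • (B₁ + μc • B₂)) (a + lam • (b₁ + δc • b₂)) (-f xbar - lam * β)
          (xbar, 1)
          = lam * ((1 / 2) * (xbar ⬝ᵥ ((B₁ + μc • B₂) *ᵥ xbar)) + (b₁ + δc • b₂) ⬝ᵥ xbar - β) := by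
        simp only [qf, Matrix.add_mulVec, Matrix.smul_mulVec, dotProduct_add,
          dotProduct_smul, add_dotProduct, smul_dotProduct, smul_eq_mul]
        rw [hf xbar]
        ring
      have hlamnn : 0 ≤ lam := by rw [hlamd]; linarith
      have hcompl : lam * ((1 / 2) * (xbar ⬝ᵥ ((B₁ + μc • B₂) *ᵥ xbar))
          + (b₁ + δc • b₂) ⬝ᵥ xbar - β) = 0 := by
        have hle : lam * ((1 / 2) * (xbar ⬝ᵥ ((B₁ + μc • B₂) *ᵥ xbar))
            + (b₁ + δc • b₂) ⬝ᵥ xbar - β) ≤ 0 :=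
          mul_nonpos_of_nonneg_of_nonpos hlamnn (by linarith)
        have hge : 0 ≤ lam * ((1 / 2) * (xbar ⬝ᵥ ((B₁ + μc • B₂) *ᵥ xbar))
            + (b₁ + δc • b₂) ⬝ᵥ xbar - β) := by
          rw [← hval]; exact hNpos (xbar, 1)
        linarith
      have hzero : qf (A + lam • (B₁ + μc • B₂)) (a + lam • (b₁ + δc • b₂))
          (-f xbar - lam * β) (xbar, 1) = 0 := by rw [hval, hcompl]
      have hstat := stationarity_of_qf_nonneg (hsymM lam μc) hNpos hzero
      refine ⟨lam, hlamnn, μc, hμcmem, δc, hδcmem, hstat, hcompl, ?_⟩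
      intro z
      have := hNpos (z, 0)
      simp only [qf, mul_zero, zero_mul, add_zero, ne_eq, OfNat.ofNat_ne_zero,
        not_false_eq_true, zero_pow] at this
      linarith
  · -- easy direction
    rintro ⟨lam, hlam, μ, hμmem, δ, hδmem, hstat, hcomp, hpsd⟩ x hx
    have hgx := (hfeas x).mp hx μ hμmem δ hδmem
    have hsym := hsymM lam μ
    have hMxbar : ∀ u : Fin n → ℝ,
        u ⬝ᵥ ((A + lam • (B₁ + μ • B₂)) *ᵥ xbar) = -(u ⬝ᵥ (a + lam • (b₁ + δ • b₂))) := by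
      intro u
      rw [hstat, dotProduct_neg]
    have hexpand : (x - xbar) ⬝ᵥ ((A + lam • (B₁ + μ • B₂)) *ᵥ (x - xbar))
        = x ⬝ᵥ ((A + lam • (B₁ + μ • B₂)) *ᵥ x)
          - 2 * (x ⬝ᵥ ((A + lam • (B₁ + μ • B₂)) *ᵥ xbar))
          + xbar ⬝ᵥ ((A + lam • (B₁ + μ • B₂)) *ᵥ xbar) := by
      simp only [Matrix.mulVec_sub, dotProduct_sub, sub_dotProduct]
      rw [dot_mulVec_symm hsym xbar x]
      ring
    have h1 := hpsd (x - xbar)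
    rw [hexpand, hMxbar x, hMxbar xbar] at h1
    have hid1 : x ⬝ᵥ ((A + lam • (B₁ + μ • B₂)) *ᵥ x)
        + 2 * (x ⬝ᵥ (a + lam • (b₁ + δ • b₂)))
        = 2 * f x + 2 * lam * ((1 / 2) * (x ⬝ᵥ ((B₁ + μ • B₂) *ᵥ x)) + (b₁ + δ • b₂) ⬝ᵥ x) := by
      rw [hf x]
      simp only [Matrix.add_mulVec, Matrix.smul_mulVec, dotProduct_add, dotProduct_smul,
        add_dotProduct, smul_dotProduct, smul_eq_mul]
      rw [dotProduct_comm x a, dotProduct_comm x b₁, dotProduct_comm x b₂]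
      ring
    have hid2 : xbar ⬝ᵥ (a + lam • (b₁ + δ • b₂))
        = 2 * f xbar + 2 * lam * ((1 / 2) * (xbar ⬝ᵥ ((B₁ + μ • B₂) *ᵥ xbar))
          + (b₁ + δ • b₂) ⬝ᵥ xbar) := by
      have h2 := hMxbar xbar
      rw [hf xbar]
      simp only [Matrix.add_mulVec, Matrix.smul_mulVec, dotProduct_add, dotProduct_smul,
        add_dotProduct, smul_dotProduct, smul_eq_mul, dotProduct_neg] at h2 ⊢
      rw [dotProduct_comm xbar a, dotProduct_comm xbar b₁, dotProduct_comm xbar b₂] at h2 ⊢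
      linarith
    have hmul : lam * ((1 / 2) * (x ⬝ᵥ ((B₁ + μ • B₂) *ᵥ x)) + (b₁ + δ • b₂) ⬝ᵥ x)
        ≤ lam * β := mul_le_mul_of_nonneg_left hgx hlam
    nlinarith [h1, hid1, hid2, hcomp, hmul]
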